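/- arXiv:0804.1647 — 2 statements merged into one kernel-verified Lean document; each statement's English description precedes it below -/
import Mathlib

section
/- Let p be a prime and m+1 = Σ_{ν≥0} b_ν p^ν its base-p expansion. Then for every i ≥ 1, ⌊(m+1)/p + (1/p)·⌊(m+1)/p^{i-1}⌋⌋ = ⌊(b_0 + b_{i-1})/p⌋ + Σ_{ν≥1} b_ν p^{ν-1} + Σ_{ν≥i} b_ν p^{ν-i}. -/
lemma digit_sum_range (p M N : ℕ) :
    ∑ ν ∈ Finset.range N, (M / p ^ ν % p) * p ^ ν = M % p ^ N := by
  induction N with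
  | zero => simp [Nat.mod_one]
  | succ N ih =>
      rw [Finset.sum_range_succ, ih, pow_succ, Nat.mod_mul]
      ring

lemma digit_finsum (p M : ℕ) (hp : 1 < p) :
    ∑ᶠ ν : ℕ, (M / p ^ ν % p) * p ^ ν = M := by
  have hlt : ∀ ν, M + 1 ≤ ν → M < p ^ ν := fun ν hν =>
    lt_of_lt_of_le (Nat.lt_pow_self hp : M < p ^ M) (Nat.pow_le_pow_right (le_of_lt hp) (by omega))
  have hsupp : (Function.support fun ν : ℕ => (M / p ^ ν % p) * p ^ ν)
      ⊆ ↑(Finset.range (M + 1)) := by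
    intro ν hν
    simp only [Finset.coe_range, Set.mem_Iio]
    by_contra h
    push_neg at h
    exact hν (by simp [Nat.div_eq_of_lt (hlt ν h)])
  rw [finsum_eq_finset_sum_of_support_subset _ hsupp, digit_sum_range,
    Nat.mod_eq_of_lt (hlt (M + 1) le_rfl)]

/-- For the base-p digits b of m+1:
`⌊(m+1)/p + (1/p)⌊(m+1)/p^{i-1}⌋⌋ = ⌊(b₀+b_{i-1})/p⌋ + Σ_{ν≥1} b_ν p^{ν-1} + Σ_{ν≥i} b_ν p^{ν-i}`. -/
theorem stmt_1 (p m : ℕ) (hp : p.Prime) (hm : 0 < m)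
    (b : ℕ → ℕ) (hb : ∀ ν, b ν = (m + 1) / p ^ ν % p)
    (i : ℕ) (hi : 1 ≤ i) :
    ((m + 1) + (m + 1) / p ^ (i - 1)) / p =
      (b 0 + b (i - 1)) / p + ∑ᶠ ν : ℕ, b (ν + 1) * p ^ ν +
        ∑ᶠ ν : ℕ, b (ν + i) * p ^ ν := by
  have hp1 : 1 < p := hp.one_lt
  set n := m + 1 with hn
  have h1 : ∑ᶠ ν : ℕ, b (ν + 1) * p ^ ν = n / p := by
    have := digit_finsum p (n / p) hp1
    rw [← this]
    apply finsum_congr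
    intro ν
    rw [hb, Nat.div_div_eq_div_mul, ← pow_succ', add_comm ν 1]
  have h2 : ∑ᶠ ν : ℕ, b (ν + i) * p ^ ν = n / p ^ i := by
    have := digit_finsum p (n / p ^ i) hp1
    rw [← this]
    apply finsum_congr
    intro ν
    rw [hb, Nat.div_div_eq_div_mul, ← pow_add, add_comm ν i]
  rw [h1, h2]
  have e0 : n = b 0 + p * (n / p) := by
    rw [hb]; simp [Nat.mod_add_div]
  have e1 : n / p ^ (i - 1) = b (i - 1) + p * (n / p ^ i) := by
    rw [hb]
    have : p ^ i = p ^ (i - 1) * p := by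
      rw [← pow_succ]; congr 1; omega
    rw [this, ← Nat.div_div_eq_div_mul, Nat.mod_add_div]
  have key : n + n / p ^ (i - 1) = b 0 + b (i - 1) + (n / p + n / p ^ i) * p := by
    nth_rewrite 1 [e0]
    rw [e1]; ring
  rw [key, Nat.add_mul_div_right _ _ hp.pos]; ring
end

section
/- Let k be a field of characteristic p and let x_1, …, x_n ∈ k. The Moore determinant Δ(x_1,…,x_n) = det( (x_j^{p^{i-1}})_{1≤i,j≤n} ) is nonzero if and only if x_1, …, x_n are linearly independent over F_p. -/
open Polynomial Finset

/-- The Moore determinant det(x_j^{p^{i-1}}) is nonzero iff x₁,…,x_n are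
linearly independent over 𝔽_p. -/
theorem stmt_9 (k : Type*) [Field k] (p : ℕ) (hp : p.Prime) [CharP k p]
    [Algebra (ZMod p) k] (n : ℕ) (x : Fin n → k) :
    (Matrix.of fun i j : Fin n => x j ^ p ^ (i : ℕ)).det ≠ 0 ↔
      LinearIndependent (ZMod p) x := by
  classical
  haveI : Fact p.Prime := ⟨hp⟩
  haveI : ExpChar k p := ExpChar.prime hp
  constructor
  · -- det ≠ 0 → linear independence
    intro hdet
    by_contra hli
    obtain ⟨g, hg0, i₀, hgi₀⟩ := Fintype.not_linearIndependent_iff.1 hli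
    apply hdet
    rw [← Matrix.exists_mulVec_eq_zero_iff]
    refine ⟨fun j => algebraMap (ZMod p) k (g j), ?_, ?_⟩
    · intro h
      apply hgi₀
      have := congrFun h i₀
      simpa using (algebraMap (ZMod p) k).injective (by simpa using this)
    · funext i
      have h0 : (∑ j, algebraMap (ZMod p) k (g j) * x j) = 0 := by
        rw [← hg0]; exact Finset.sum_congr rfl fun j _ => (Algebra.smul_def _ _).symm
      have := congrArg (· ^ p ^ (i : ℕ)) h0
      simp only [sum_pow_char_pow, zero_pow (pow_ne_zero _ hp.ne_zero)] at this
      calc (Matrix.of fun i j : Fin n => x j ^ p ^ (i : ℕ)).mulVec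
              (fun j => algebraMap (ZMod p) k (g j)) i
          = ∑ j, x j ^ p ^ (i : ℕ) * algebraMap (ZMod p) k (g j) := rfl
        _ = ∑ j, (algebraMap (ZMod p) k (g j) * x j) ^ p ^ (i : ℕ) := by
            refine Finset.sum_congr rfl fun j _ => ?_
            rw [mul_pow, ← map_pow, ZMod.pow_card_pow, mul_comm]
        _ = 0 := this
  · -- linear independence → det ≠ 0
    intro hli hdet
    obtain ⟨a, ha0, ha⟩ := Matrix.exists_vecMul_eq_zero_iff.2 hdet
    obtain ⟨i₀, hi₀⟩ := Function.ne_iff.1 ha0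
    have hn : n ≠ 0 := fun h => by subst h; exact i₀.elim0
    -- the additive polynomial as a linear map
    have hroot : ∀ j, ∑ i, a i * x j ^ p ^ (i : ℕ) = 0 := by
      intro j
      have := congrFun ha j
      simpa [Matrix.vecMul, dotProduct] using this
    set L : k →ₗ[ZMod p] k :=
      { toFun := fun y => ∑ i, a i * y ^ p ^ (i : ℕ)
        map_add' := fun u v => by
          simp only [add_pow_char_pow, mul_add, Finset.sum_add_distrib]
        map_smul' := fun c y => by
          simp only [RingHom.id_apply, Finset.smul_sum]
          refine Finset.sum_congr rfl fun i _ => ?_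
          rw [Algebra.smul_def, mul_pow, ← map_pow, ZMod.pow_card_pow,
            ← Algebra.smul_def, mul_smul_comm] } with hL
    have hspan : Submodule.span (ZMod p) (Set.range x) ≤ LinearMap.ker L := by
      rw [Submodule.span_le]
      rintro _ ⟨j, rfl⟩
      exact hroot j
    -- the polynomial
    set f : k[X] := ∑ i : Fin n, C (a i) * X ^ p ^ (i : ℕ) with hf
    have hfne : f ≠ 0 := by
      intro h
      apply hi₀
      have : f.coeff (p ^ (i₀ : ℕ)) = a i₀ := by
        rw [hf, Polynomial.finset_sum_coeff]
        rw [Finset.sum_eq_single i₀]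
        · simp
        · intro i _ hii
          simp only [coeff_C_mul, coeff_X_pow]
          rw [if_neg, mul_zero]
          exact fun hh => hii (Fin.ext (Nat.pow_right_injective hp.two_le hh.symm))
        · simp
      rw [h] at this
      simpa using this.symm
    have heval : ∀ y : k, f.eval y = L y := by
      intro y
      simp [hf, hL, Polynomial.eval_finset_sum]
    -- finiteness of the span
    let b := Module.Basis.span hli
    haveI : Fintype (Submodule.span (ZMod p) (Set.range x)) := Module.fintypeOfFintype b
    have hcard : Fintype.card (Submodule.span (ZMod p) (Set.range x)) = p ^ n := by
      rw [Module.card_fintype b, ZMod.card, Fintype.card_fin]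
    -- injection into the roots
    have hinj : Fintype.card (Submodule.span (ZMod p) (Set.range x)) ≤
        f.roots.toFinset.card := by
      have : ∀ y : Submodule.span (ZMod p) (Set.range x), (y : k) ∈ f.roots.toFinset := by
        rintro ⟨y, hy⟩
        rw [Multiset.mem_toFinset, Polynomial.mem_roots hfne]
        show f.eval y = 0
        rw [heval]
        exact hspan hy
      let F : Submodule.span (ZMod p) (Set.range x) → {y // y ∈ f.roots.toFinset} :=
        fun y => ⟨(y : k), this y⟩
      have hFinj : Function.Injective F := fun y z h =>
        Subtype.ext (congrArg Subtype.val h : ((F y : k) = F z))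
      simpa using Fintype.card_le_of_injective F hFinj
    have hdeg : f.natDegree ≤ p ^ (n - 1) := by
      refine Polynomial.natDegree_sum_le_of_forall_le _ _ fun i _ => ?_
      refine (Polynomial.natDegree_C_mul_le _ _).trans ?_
      rw [Polynomial.natDegree_X_pow]
      exact Nat.pow_le_pow_right hp.pos (Nat.le_sub_one_of_lt i.isLt)
    have hle : p ^ n ≤ p ^ (n - 1) := by
      calc p ^ n = Fintype.card (Submodule.span (ZMod p) (Set.range x)) := hcard.symm
        _ ≤ f.roots.toFinset.card := hinj
        _ ≤ Multiset.card f.roots := f.roots.toFinset_card_le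
        _ ≤ f.natDegree := f.card_roots'
        _ ≤ p ^ (n - 1) := hdeg
    exact absurd hle (not_le.2 (Nat.pow_lt_pow_right hp.one_lt
      (Nat.sub_lt (Nat.pos_of_ne_zero hn) one_pos)))
end
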